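/- Let f, g : [a,b] → ℝ be continuous and positive, and let p < 0 with 1/p + 1/q = 1. Then ∫_a^b f(x)^p / g(x)^(p/q) dx ≥ (∫_a^b f(x) dx)^p / (∫_a^b g(x) dx)^(p/q). -/

import Mathlib

open MeasureTheory Set intervalIntegral

theorem holder_consequence_neg (a b p q : ℝ) (hab : a < b) (hp : p < 0)
    (hpq : 1 / p + 1 / q = 1) (f g : ℝ → ℝ)
    (hfc : ContinuousOn f (Set.Icc a b)) (hgc : ContinuousOn g (Set.Icc a b))
    (hfpos : ∀ x ∈ Set.Icc a b, 0 < f x) (hgpos : ∀ x ∈ Set.Icc a b, 0 < g x) :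
    (∫ x in a..b, f x ^ p / g x ^ (p / q)) ≥
      (∫ x in a..b, f x) ^ p / (∫ x in a..b, g x) ^ (p / q) := by
  have hab' : a ≤ b := hab.le
  have hp0 : p ≠ 0 := hp.ne
  have hq0 : q ≠ 0 := by
    intro h
    rw [h] at hpq
    simp at hpq
    have : (1:ℝ)/p < 0 := by
      apply div_neg_of_pos_of_neg one_pos hp
    linarith
  -- p / q = p - 1
  have hpq' : p / q = p - 1 := by
    have : (1:ℝ)/q = 1 - 1/p := by linarith
    have : p / q = p * (1/q) := by ring
    rw [this, ‹(1:ℝ)/q = 1 - 1/p›]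
    field_simp
  set P : ℝ := 1 - p with hPdef
  have hP1 : 1 < P := by simp [hPdef]; linarith
  have hP0 : (0:ℝ) < P := by linarith
  set Q : ℝ := (1 - p) / (-p) with hQdef
  have hQ0 : (0:ℝ) < Q := by
    apply div_pos <;> linarith
  have hconj : P.HolderConjugate Q := by
    rw [Real.holderConjugate_iff]
    constructor
    · exact hP1
    · rw [hPdef, hQdef]
      field_simp
      rw [← sub_eq_add_neg]
      exact div_self (by linarith)
  set μ := volume.restrict (Set.Ioc a b) with hμ
  haveI : IsFiniteMeasure μ := by
    constructor
    rw [hμ, Measure.restrict_apply_univ, Real.volume_Ioc]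
    exact ENNReal.ofReal_lt_top
  set h : ℝ → ℝ := fun x => f x ^ p * g x ^ (1 - p) with hhdef
  set u : ℝ → ℝ := fun x => f x ^ (p / P) * g x ^ ((1 - p) / P) with hudef
  set v : ℝ → ℝ := fun x => f x ^ (1 / Q) with hvdef
  have hIoc : Set.Ioc a b ⊆ Set.Icc a b := Set.Ioc_subset_Icc_self
  -- continuity
  have hfc' : ∀ c : ℝ, ContinuousOn (fun x => f x ^ c) (Set.Icc a b) := fun c =>
    hfc.rpow_const (fun x hx => Or.inl (hfpos x hx).ne')
  have hgc' : ∀ c : ℝ, ContinuousOn (fun x => g x ^ c) (Set.Icc a b) := fun c =>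
    hgc.rpow_const (fun x hx => Or.inl (hgpos x hx).ne')
  have huc : ContinuousOn u (Set.Icc a b) := (hfc' _).mul (hgc' _)
  have hvc : ContinuousOn v (Set.Icc a b) := hfc' _
  have hhc : ContinuousOn h (Set.Icc a b) := (hfc' _).mul (hgc' _)
  -- Memℒp
  have memlp : ∀ (F : ℝ → ℝ) (r : ℝ), ContinuousOn F (Set.Icc a b) →
      MemLp F (ENNReal.ofReal r) μ := by
    intro F r hFc
    obtain ⟨C, hC⟩ := (isCompact_Icc).exists_bound_of_continuousOn hFc
    refine MemLp.of_bound ((hFc.mono hIoc).aestronglyMeasurable measurableSet_Ioc) C ?_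
    rw [hμ, ae_restrict_iff' measurableSet_Ioc]
    exact Filter.Eventually.of_forall (fun x hx => hC x (hIoc hx))
  -- pointwise identities on Icc
  have huv : ∀ x ∈ Set.Icc a b, u x * v x = g x := by
    intro x hx
    have hf0 := hfpos x hx
    have hg0 := hgpos x hx
    rw [hudef, hvdef]
    simp only
    rw [mul_right_comm, ← Real.rpow_add hf0]
    have : p / P + 1 / Q = 0 := by
      rw [hPdef, hQdef]; field_simp; ring
    rw [this, Real.rpow_zero, one_mul]
    have : (1 - p) / P = 1 := by rw [hPdef]; exact div_self (by linarith)
    rw [this, Real.rpow_one]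
  have huP : ∀ x ∈ Set.Icc a b, u x ^ P = h x := by
    intro x hx
    have hf0 := hfpos x hx
    have hg0 := hgpos x hx
    rw [hudef, hhdef]
    simp only
    rw [Real.mul_rpow (Real.rpow_nonneg hf0.le _) (Real.rpow_nonneg hg0.le _),
      ← Real.rpow_mul hf0.le, ← Real.rpow_mul hg0.le,
      div_mul_cancel₀ _ hP0.ne', div_mul_cancel₀ _ hP0.ne']
  have hvQ : ∀ x ∈ Set.Icc a b, v x ^ Q = f x := by
    intro x hx
    have hf0 := hfpos x hx
    rw [hvdef]
    simp only
    rw [← Real.rpow_mul hf0.le, one_div_mul_cancel hQ0.ne', Real.rpow_one]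
  -- nonnegativity a.e.
  have ae_of : ∀ {Pr : ℝ → Prop}, (∀ x ∈ Set.Icc a b, Pr x) → (∀ᵐ x ∂μ, Pr x) := by
    intro Pr hPr
    rw [hμ, ae_restrict_iff' measurableSet_Ioc]
    exact Filter.Eventually.of_forall (fun x hx => hPr x (hIoc hx))
  have hu_nn : 0 ≤ᵐ[μ] u := ae_of (fun x hx =>
    mul_nonneg (Real.rpow_nonneg (hfpos x hx).le _) (Real.rpow_nonneg (hgpos x hx).le _))
  have hv_nn : 0 ≤ᵐ[μ] v := ae_of (fun x hx => Real.rpow_nonneg (hfpos x hx).le _)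
  -- Hölder
  have holder := MeasureTheory.integral_mul_le_Lp_mul_Lq_of_nonneg hconj hu_nn hv_nn
    (memlp u P huc) (memlp v Q hvc)
  have e1 : ∫ x, u x * v x ∂μ = ∫ x, g x ∂μ :=
    integral_congr_ae (ae_of (fun x hx => huv x hx))
  have e2 : ∫ x, u x ^ P ∂μ = ∫ x, h x ∂μ :=
    integral_congr_ae (ae_of (fun x hx => huP x hx))
  have e3 : ∫ x, v x ^ Q ∂μ = ∫ x, f x ∂μ :=
    integral_congr_ae (ae_of (fun x hx => hvQ x hx))
  rw [e1, e2, e3] at holder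
  -- interval integrals vs measure integrals
  have hiF : (∫ x in a..b, f x) = ∫ x, f x ∂μ := intervalIntegral.integral_of_le hab'
  have hiG : (∫ x in a..b, g x) = ∫ x, g x ∂μ := intervalIntegral.integral_of_le hab'
  have hiH : (∫ x in a..b, h x) = ∫ x, h x ∂μ := intervalIntegral.integral_of_le hab'
  set F := ∫ x, f x ∂μ with hFdef
  set G := ∫ x, g x ∂μ with hGdef
  set H := ∫ x, h x ∂μ with hHdef
  have huIcc : Set.uIcc a b = Set.Icc a b := Set.uIcc_of_le hab'
  have hF0 : 0 < F := by
    rw [← hiF]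
    exact intervalIntegral.intervalIntegral_pos_of_pos_on
      ((hfc.mono (by rw [huIcc])).intervalIntegrable)
      (fun x hx => hfpos x (hIoc (Set.Ioo_subset_Ioc_self hx))) hab
  have hG0 : 0 < G := by
    rw [← hiG]
    exact intervalIntegral.intervalIntegral_pos_of_pos_on
      ((hgc.mono (by rw [huIcc])).intervalIntegrable)
      (fun x hx => hgpos x (hIoc (Set.Ioo_subset_Ioc_self hx))) hab
  have hH0 : 0 < H := by
    rw [← hiH]
    refine intervalIntegral.intervalIntegral_pos_of_pos_on
      ((hhc.mono (by rw [huIcc])).intervalIntegrable)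
      (fun x hx => ?_) hab
    have hx' := hIoc (Set.Ioo_subset_Ioc_self hx)
    exact mul_pos (Real.rpow_pos_of_pos (hfpos x hx') _) (Real.rpow_pos_of_pos (hgpos x hx') _)
  -- key algebraic step
  have hGP : G ^ P ≤ H * F ^ (-p) := by
    calc G ^ P ≤ (H ^ (1/P) * F ^ (1/Q)) ^ P := Real.rpow_le_rpow hG0.le holder hP0.le
      _ = H * F ^ (-p) := by
        rw [Real.mul_rpow (Real.rpow_nonneg hH0.le _) (Real.rpow_nonneg hF0.le _),
          ← Real.rpow_mul hH0.le, ← Real.rpow_mul hF0.le,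
          one_div_mul_cancel hP0.ne', Real.rpow_one]
        have hePQ : 1/Q * P = -p := by
          rw [hQdef, hPdef]
          rw [div_mul_eq_mul_div, one_mul, div_div_eq_mul_div, div_eq_iff (by linarith : (1:ℝ)-p ≠ 0)]
          ring
        rw [hePQ]
  have hmain : F ^ p * G ^ P ≤ H := by
    have h1 : F ^ p * G ^ P ≤ F ^ p * (H * F ^ (-p)) :=
      mul_le_mul_of_nonneg_left hGP (Real.rpow_nonneg hF0.le _)
    have h2 : F ^ p * (H * F ^ (-p)) = H := by
      rw [mul_comm H, ← mul_assoc, ← Real.rpow_add hF0, add_neg_cancel, Real.rpow_zero, one_mul]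
    linarith
  -- finish
  have eL : (∫ x in a..b, f x ^ p / g x ^ (p / q)) = H := by
    rw [← hiH]
    apply intervalIntegral.integral_congr
    intro x hx
    rw [huIcc] at hx
    have hg0 := hgpos x hx
    rw [hpq', hhdef]
    simp only
    rw [div_eq_mul_inv, ← Real.rpow_neg hg0.le, neg_sub]
  have eR : F ^ p / G ^ (p / q) = F ^ p * G ^ P := by
    rw [hpq', div_eq_mul_inv, ← Real.rpow_neg hG0.le, neg_sub, hPdef]
  rw [ge_iff_le, hiF, hiG, eL, eR]
  exact hmain
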